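/- With the notation above, ‖Σ_k V_kᵀ(I − Ẑ_k Ẑ_kᵀ)‖² ≤ ‖Σ_k Δᵀ‖² · (‖Δ(I + ΔᵀΔ)^{−1}‖² + 1). In particular, if ‖Δ‖ < 1 this bound equals ‖Σ_k Δᵀ‖²·((‖Δ‖/(1+‖Δ‖²))² + 1), and in general it is at most (5/4)·‖Σ_k Δᵀ‖². -/

import Mathlib

open Matrix
open scoped Matrix.Norms.L2Operator

/-- The spectral (operator 2-)norm of a real matrix. -/
noncomputable def specNorm {m n : ℕ} (A : Matrix (Fin m) (Fin n) ℝ) : ℝ :=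
  ‖LinearMap.toContinuousLinearMap (Matrix.toEuclideanLin A)‖

lemma specNorm_eq_norm {m n : ℕ} (A : Matrix (Fin m) (Fin n) ℝ) : specNorm A = ‖A‖ := rfl

lemma specNorm_nonneg {m n : ℕ} (A : Matrix (Fin m) (Fin n) ℝ) : 0 ≤ specNorm A :=
  norm_nonneg _

lemma specNorm_transpose {m n : ℕ} (A : Matrix (Fin m) (Fin n) ℝ) :
    specNorm Aᵀ = specNorm A := by
  rw [specNorm_eq_norm, specNorm_eq_norm, ← Matrix.l2_opNorm_conjTranspose A]; congr 1

lemma norm_ev_sq {m : ℕ} (v : Fin m → ℝ) :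
    ‖((WithLp.equiv 2 (Fin m → ℝ)).symm v)‖ ^ 2 = v ⬝ᵥ v := by
  rw [EuclideanSpace.norm_eq, Real.sq_sqrt (by positivity)]
  simp [dotProduct, sq]

lemma dot_self_nonneg' {m : ℕ} (v : Fin m → ℝ) : 0 ≤ v ⬝ᵥ v := by
  apply Finset.sum_nonneg; intro i _; exact mul_self_nonneg _

lemma dot_sq_le {m : ℕ} (u v : Fin m → ℝ) : (u ⬝ᵥ v) ^ 2 ≤ (u ⬝ᵥ u) * (v ⬝ᵥ v) := by
  have h := abs_real_inner_le_norm ((WithLp.equiv 2 (Fin m → ℝ)).symm u)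
    ((WithLp.equiv 2 (Fin m → ℝ)).symm v)
  have hi : (inner ℝ ((WithLp.equiv 2 (Fin m → ℝ)).symm u)
      ((WithLp.equiv 2 (Fin m → ℝ)).symm v) : ℝ) = u ⬝ᵥ v := by
    simp [PiLp.inner_apply, dotProduct, mul_comm]
  rw [hi] at h
  have := norm_ev_sq u
  have := norm_ev_sq v
  nlinarith [abs_nonneg (u ⬝ᵥ v), sq_abs (u ⬝ᵥ v),
    norm_nonneg ((WithLp.equiv 2 (Fin m → ℝ)).symm u),
    norm_nonneg ((WithLp.equiv 2 (Fin m → ℝ)).symm v)]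

lemma dot_le {m n : ℕ} (A : Matrix (Fin m) (Fin n) ℝ) (v : Fin n → ℝ) :
    (A *ᵥ v) ⬝ᵥ (A *ᵥ v) ≤ specNorm A ^ 2 * (v ⬝ᵥ v) := by
  set T := LinearMap.toContinuousLinearMap (Matrix.toEuclideanLin A) with hT
  have h := T.le_opNorm ((WithLp.equiv 2 (Fin n → ℝ)).symm v)
  have happ : T ((WithLp.equiv 2 (Fin n → ℝ)).symm v) =
      (WithLp.equiv 2 (Fin m → ℝ)).symm (A *ᵥ v) := by
    rw [hT]; simp [Matrix.toEuclideanLin_apply]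
  rw [happ] at h
  have h2 : ‖(WithLp.equiv 2 (Fin m → ℝ)).symm (A *ᵥ v)‖ ^ 2 ≤
      (‖T‖ * ‖(WithLp.equiv 2 (Fin n → ℝ)).symm v‖) ^ 2 :=
    pow_le_pow_left₀ (norm_nonneg _) h 2
  rw [norm_ev_sq, mul_pow, norm_ev_sq] at h2
  exact h2

lemma norm_le_of_dot {m n : ℕ} (A : Matrix (Fin m) (Fin n) ℝ) (c : ℝ) (hc : 0 ≤ c)
    (h : ∀ v, (A *ᵥ v) ⬝ᵥ (A *ᵥ v) ≤ c ^ 2 * (v ⬝ᵥ v)) : specNorm A ≤ c := by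
  apply ContinuousLinearMap.opNorm_le_bound _ hc
  intro x
  have h1 := h (WithLp.equiv 2 (Fin n → ℝ) x)
  have happ : LinearMap.toContinuousLinearMap (Matrix.toEuclideanLin A) x =
      (WithLp.equiv 2 (Fin m → ℝ)).symm (A *ᵥ (WithLp.equiv 2 (Fin n → ℝ) x)) := by
    simp [Matrix.toEuclideanLin_apply]
  rw [happ]
  have hx2 : ‖x‖ ^ 2 = (WithLp.equiv 2 (Fin n → ℝ) x) ⬝ᵥ (WithLp.equiv 2 (Fin n → ℝ) x) := by
    rw [← norm_ev_sq]; rfl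
  have h2 : ‖(WithLp.equiv 2 (Fin m → ℝ)).symm (A *ᵥ (WithLp.equiv 2 (Fin n → ℝ) x))‖ ^ 2
      ≤ (c * ‖x‖) ^ 2 := by
    rw [norm_ev_sq, mul_pow, hx2]; exact h1
  nlinarith [norm_nonneg ((WithLp.equiv 2 (Fin m → ℝ)).symm
      (A *ᵥ (WithLp.equiv 2 (Fin n → ℝ) x))),
    mul_nonneg hc (norm_nonneg x)]

lemma specNorm_zero {m n : ℕ} : specNorm (0 : Matrix (Fin m) (Fin n) ℝ) = 0 := by
  unfold specNorm
  rw [map_zero, map_zero, norm_zero]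

set_option maxHeartbeats 1000000 in
/-- Key norm equality: `‖Δ(1+ΔᵀΔ)⁻¹‖ = ‖Δ‖/(1+‖Δ‖²)` when `‖Δ‖ < 1`. -/
lemma specNorm_mul_inv_eq {p k : ℕ} (Δ : Matrix (Fin p) (Fin k) ℝ)
    (ha : specNorm Δ < 1) :
    specNorm (Δ * (1 + Δᵀ * Δ)⁻¹) = specNorm Δ / (1 + specNorm Δ ^ 2) := by
  set a := specNorm Δ with haa
  have ha0 : 0 ≤ a := specNorm_nonneg Δ
  set A := 1 + Δᵀ * Δ with hA
  have hApd : A.PosDef := (Matrix.PosDef.one).add_posSemidef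
    (by have := Matrix.posSemidef_conjTranspose_mul_self Δ; convert this using 2 <;> simp)
  have hAdet : IsUnit A.det := (Matrix.isUnit_iff_isUnit_det A).mp hApd.isUnit
  have hAA : A * A⁻¹ = 1 := Matrix.mul_nonsing_inv A hAdet
  have hAA' : A⁻¹ * A = 1 := Matrix.nonsing_inv_mul A hAdet
  apply le_antisymm
  · apply norm_le_of_dot _ _ (by positivity)
    intro v
    set u := A⁻¹ *ᵥ v with hu
    have hv : A *ᵥ u = v := by
      rw [hu, Matrix.mulVec_mulVec, hAA, Matrix.one_mulVec]
    have hDAv : (Δ * A⁻¹) *ᵥ v = Δ *ᵥ u := by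
      rw [← Matrix.mulVec_mulVec]
    set w := Δᵀ *ᵥ (Δ *ᵥ u) with hw
    have hAu : A *ᵥ u = u + w := by
      rw [hA, Matrix.add_mulVec, Matrix.one_mulVec, ← Matrix.mulVec_mulVec]
    set t := (Δ *ᵥ u) ⬝ᵥ (Δ *ᵥ u) with ht
    set U := u ⬝ᵥ u with hU
    set s := w ⬝ᵥ w with hs
    have hxw : u ⬝ᵥ w = t := by
      rw [hw, Matrix.dotProduct_mulVec]
      congr 1
      rw [← Matrix.mulVec_transpose, Matrix.transpose_transpose]
    have hwx : w ⬝ᵥ u = t := by rw [dotProduct_comm, hxw]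
    have hS : (A *ᵥ u) ⬝ᵥ (A *ᵥ u) = U + 2 * t + s := by
      rw [hAu, add_dotProduct, dotProduct_add, dotProduct_add, hxw, hwx]
      ring
    have htle : t ≤ a ^ 2 * U := dot_le Δ u
    have hcs : t ^ 2 ≤ U * s := by
      have := dot_sq_le u w
      rwa [hxw] at this
    have ht0 : 0 ≤ t := dot_self_nonneg' _
    have hU0 : 0 ≤ U := dot_self_nonneg' _
    have hs0 : 0 ≤ s := dot_self_nonneg' _
    rw [hDAv, ← hv, hS, ← ht, div_pow, div_mul_eq_mul_div,
      le_div_iff₀ (by positivity)]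
    have h1 : 0 ≤ a ^ 2 * U - t := by linarith
    have ha4 : a ^ 4 ≤ 1 := pow_le_one₀ ha0 ha.le
    have h2' : a ^ 2 * t ≤ a ^ 2 * (a ^ 2 * U) :=
      mul_le_mul_of_nonneg_left htle (sq_nonneg a)
    have h2 : 0 ≤ U - a ^ 2 * t := by nlinarith [mul_nonneg (sub_nonneg.mpr ha4) hU0]
    rcases eq_or_lt_of_le hU0 with hU' | hU'
    · have htz : t = 0 := by nlinarith
      rw [htz]; nlinarith
    · nlinarith [mul_nonneg h1 h2]
  · rcases Nat.eq_zero_or_pos k with hk | hk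
    · subst hk
      have hΔ : Δ = 0 := by ext i j; exact j.elim0
      rw [hΔ] at haa ⊢
      rw [Matrix.zero_mul, specNorm_zero, haa, specNorm_zero]
      norm_num
    · set T := LinearMap.toContinuousLinearMap (Matrix.toEuclideanLin Δ) with hT
      have hTa : ‖T‖ = a := rfl
      have hne : (EuclideanSpace.single (⟨0, hk⟩ : Fin k) (1:ℝ)) ∈
          Metric.sphere (0 : EuclideanSpace ℝ (Fin k)) 1 := by
        rw [mem_sphere_zero_iff_norm, EuclideanSpace.norm_single]
        norm_num
      obtain ⟨x₀, hx₀S, hmax⟩ := (isCompact_sphere (0 : EuclideanSpace ℝ (Fin k)) 1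
        ).exists_isMaxOn ⟨_, hne⟩ ((continuous_norm.comp T.continuous).continuousOn)
      have hx₀ : ‖x₀‖ = 1 := mem_sphere_zero_iff_norm.mp hx₀S
      have hTx₀ : ‖T x₀‖ = a := by
        rw [← hTa]
        apply le_antisymm (T.unit_le_opNorm x₀ (le_of_eq hx₀))
        apply ContinuousLinearMap.opNorm_le_bound _ (norm_nonneg _)
        intro y
        by_cases hy : y = 0
        · simp [hy]
        · have hyn : (0:ℝ) < ‖y‖ := norm_pos_iff.mpr hy
          have hxS : (‖y‖⁻¹ • y) ∈ Metric.sphere (0 : EuclideanSpace ℝ (Fin k)) 1 := by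
            rw [mem_sphere_zero_iff_norm, norm_smul, norm_inv, norm_norm]
            field_simp
          have h5 : ‖T (‖y‖⁻¹ • y)‖ ≤ ‖T x₀‖ := hmax hxS
          rw [_root_.map_smul, norm_smul, norm_inv, norm_norm] at h5
          calc ‖T y‖ = ‖y‖ * (‖y‖⁻¹ * ‖T y‖) := by field_simp
            _ ≤ ‖y‖ * ‖T x₀‖ := mul_le_mul_of_nonneg_left h5 (le_of_lt hyn)
            _ = ‖T x₀‖ * ‖y‖ := mul_comm _ _
      set x : Fin k → ℝ := WithLp.equiv 2 (Fin k → ℝ) x₀ with hx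
      have hxdot : x ⬝ᵥ x = 1 := by
        rw [← norm_ev_sq]
        show ‖x₀‖ ^ 2 = 1
        rw [hx₀]; norm_num
      have hTapp : T x₀ = (WithLp.equiv 2 (Fin p → ℝ)).symm (Δ *ᵥ x) := by
        rw [hT]; simp [Matrix.toEuclideanLin_apply]; rfl
      have htval : (Δ *ᵥ x) ⬝ᵥ (Δ *ᵥ x) = a ^ 2 := by
        rw [← norm_ev_sq, ← hTapp, hTx₀]
      set w := Δᵀ *ᵥ (Δ *ᵥ x) with hw
      have hxw : x ⬝ᵥ w = a ^ 2 := by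
        rw [hw, Matrix.dotProduct_mulVec, ← Matrix.mulVec_transpose,
          Matrix.transpose_transpose, htval]
      have hw_le : w ⬝ᵥ w ≤ a ^ 2 * a ^ 2 := by
        have h := dot_le Δᵀ (Δ *ᵥ x)
        rwa [specNorm_transpose, ← hw, htval] at h
      have hw_ge : a ^ 2 * a ^ 2 ≤ w ⬝ᵥ w := by
        have h := dot_sq_le x w
        rw [hxw, hxdot, one_mul] at h
        nlinarith
      have hww : w ⬝ᵥ w = a ^ 2 * a ^ 2 := le_antisymm hw_le hw_ge
      have hwx : w ⬝ᵥ x = a ^ 2 := by rw [dotProduct_comm, hxw]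
      set v := A *ᵥ x with hv
      have hAx : A *ᵥ x = x + w := by
        rw [hA, Matrix.add_mulVec, Matrix.one_mulVec, ← Matrix.mulVec_mulVec]
      have hvdot : v ⬝ᵥ v = (1 + a ^ 2) ^ 2 := by
        rw [hv, hAx, add_dotProduct, dotProduct_add, dotProduct_add,
          hxdot, hxw, hwx, hww]
        ring
      have happ : (Δ * A⁻¹) *ᵥ v = Δ *ᵥ x := by
        rw [hv, Matrix.mulVec_mulVec, Matrix.mul_assoc, hAA', Matrix.mul_one]
      have hfin := dot_le (Δ * A⁻¹) v
      rw [happ, htval, hvdot] at hfin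
      have hc0 : 0 ≤ specNorm (Δ * A⁻¹) := specNorm_nonneg _
      rw [div_le_iff₀ (by positivity)]
      have h6 : a ^ 2 ≤ (specNorm (Δ * A⁻¹) * (1 + a ^ 2)) ^ 2 := by
        rw [mul_pow]; exact hfin
      have hr : 0 ≤ specNorm (Δ * A⁻¹) * (1 + a ^ 2) := by positivity
      nlinarith [h6, hr, ha0]

set_option maxHeartbeats 1000000 in
/-- With Ẑ_k = (V_k + V_k^⊥Δ)(I + ΔᵀΔ)^{−1/2} and Σ_k = diag(d) with positive
entries: ‖Σ_k V_kᵀ(I − Ẑ_kẐ_kᵀ)‖² ≤ ‖Σ_kΔᵀ‖²·(‖Δ(I+ΔᵀΔ)⁻¹‖² + 1); if ‖Δ‖ < 1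
this bound equals ‖Σ_kΔᵀ‖²·((‖Δ‖/(1+‖Δ‖²))² + 1), and in general
‖Σ_k V_kᵀ(I − Ẑ_kẐ_kᵀ)‖² ≤ (5/4)·‖Σ_kΔᵀ‖². -/
theorem residual_norm_sq_bound {n k p : ℕ}
    (Vk : Matrix (Fin n) (Fin k) ℝ) (Vp : Matrix (Fin n) (Fin p) ℝ)
    (hVk : Vkᵀ * Vk = 1) (hVp : Vpᵀ * Vp = 1) (hVkp : Vkᵀ * Vp = 0)
    (hfull : Vk * Vkᵀ + Vp * Vpᵀ = 1)
    (Δ : Matrix (Fin p) (Fin k) ℝ)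
    (N : Matrix (Fin k) (Fin k) ℝ) (hNpd : N.PosDef)
    (hN : N * N = (1 + Δᵀ * Δ)⁻¹)
    (d : Fin k → ℝ) (hd : ∀ i, 0 < d i) :
    let Z : Matrix (Fin n) (Fin k) ℝ := (Vk + Vp * Δ) * N
    specNorm (Matrix.diagonal d * Vkᵀ * (1 - Z * Zᵀ)) ^ 2 ≤
        specNorm (Matrix.diagonal d * Δᵀ) ^ 2 *
          (specNorm (Δ * (1 + Δᵀ * Δ)⁻¹) ^ 2 + 1) ∧
    (specNorm Δ < 1 →
      specNorm (Matrix.diagonal d * Δᵀ) ^ 2 *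
          (specNorm (Δ * (1 + Δᵀ * Δ)⁻¹) ^ 2 + 1) =
        specNorm (Matrix.diagonal d * Δᵀ) ^ 2 *
          ((specNorm Δ / (1 + specNorm Δ ^ 2)) ^ 2 + 1)) ∧
    specNorm (Matrix.diagonal d * Vkᵀ * (1 - Z * Zᵀ)) ^ 2 ≤
        5 / 4 * specNorm (Matrix.diagonal d * Δᵀ) ^ 2 := by
  intro Z
  have hZ : Z = (Vk + Vp * Δ) * N := rfl
  set D := Matrix.diagonal d with hD
  set A := 1 + Δᵀ * Δ with hA
  set B := 1 + Δ * Δᵀ with hB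
  set W := B⁻¹ * (Δ * Vkᵀ - Vpᵀ) with hW
  have hApd : A.PosDef := (Matrix.PosDef.one).add_posSemidef
    (by have := Matrix.posSemidef_conjTranspose_mul_self Δ; convert this using 2 <;> simp)
  have hBpd : B.PosDef := (Matrix.PosDef.one).add_posSemidef
    (by have := Matrix.posSemidef_self_mul_conjTranspose Δ; convert this using 2 <;> simp)
  have hAdet : IsUnit A.det := (Matrix.isUnit_iff_isUnit_det A).mp hApd.isUnit
  have hBdet : IsUnit B.det := (Matrix.isUnit_iff_isUnit_det B).mp hBpd.isUnit
  have hAA : A * A⁻¹ = 1 := Matrix.mul_nonsing_inv A hAdet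
  have hAA' : A⁻¹ * A = 1 := Matrix.nonsing_inv_mul A hAdet
  have hBB : B * B⁻¹ = 1 := Matrix.mul_nonsing_inv B hBdet
  have hBB' : B⁻¹ * B = 1 := Matrix.nonsing_inv_mul B hBdet
  have hNsym : Nᵀ = N := hNpd.isHermitian
  have hVpk : Vpᵀ * Vk = 0 := by
    have := congrArg Matrix.transpose hVkp
    simpa using this
  have hcommAB : Δᵀ * B = A * Δᵀ := by
    rw [hA, hB]; rw [Matrix.mul_add, Matrix.add_mul]
    rw [Matrix.mul_one, Matrix.one_mul, Matrix.mul_assoc]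
  have hcomm : A⁻¹ * Δᵀ = Δᵀ * B⁻¹ := by
    calc A⁻¹ * Δᵀ = A⁻¹ * Δᵀ * (B * B⁻¹) := by rw [hBB, Matrix.mul_one]
      _ = A⁻¹ * (Δᵀ * B) * B⁻¹ := by rw [Matrix.mul_assoc, Matrix.mul_assoc, Matrix.mul_assoc]
      _ = A⁻¹ * A * (Δᵀ * B⁻¹) := by
          rw [hcommAB, Matrix.mul_assoc, Matrix.mul_assoc, ← Matrix.mul_assoc A⁻¹ A]
      _ = Δᵀ * B⁻¹ := by rw [hAA', Matrix.one_mul]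
  have honeSub : (1 : Matrix (Fin k) (Fin k) ℝ) - A⁻¹ = Δᵀ * B⁻¹ * Δ := by
    have h1 : A⁻¹ * A = A⁻¹ + A⁻¹ * (Δᵀ * Δ) := by
      rw [hA, Matrix.mul_add, Matrix.mul_one]
    rw [← hAA'] at *
    rw [h1]
    rw [add_sub_cancel_left]
    rw [← Matrix.mul_assoc, hcomm]
  have hZZ : Z * Zᵀ = (Vk + Vp * Δ) * (A⁻¹ * (Vk + Vp * Δ)ᵀ) := by
    rw [hZ, Matrix.transpose_mul, hNsym, ← hN]
    rw [Matrix.mul_assoc, ← Matrix.mul_assoc N N, Matrix.mul_assoc]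
  have hVkZZ : Vkᵀ * (Z * Zᵀ) = A⁻¹ * (Vkᵀ + Δᵀ * Vpᵀ) := by
    rw [hZZ, ← Matrix.mul_assoc, Matrix.mul_add, hVk, ← Matrix.mul_assoc Vkᵀ Vp Δ, hVkp,
      Matrix.zero_mul, add_zero, Matrix.one_mul, Matrix.transpose_add, Matrix.transpose_mul]
  have hsub : Vkᵀ - A⁻¹ * (Vkᵀ + Δᵀ * Vpᵀ) = Δᵀ * W := by
    calc Vkᵀ - A⁻¹ * (Vkᵀ + Δᵀ * Vpᵀ)
        = (1 - A⁻¹) * Vkᵀ - (A⁻¹ * Δᵀ) * Vpᵀ := by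
          rw [Matrix.sub_mul, Matrix.one_mul, Matrix.mul_add, ← Matrix.mul_assoc]
          abel
      _ = Δᵀ * B⁻¹ * Δ * Vkᵀ - Δᵀ * B⁻¹ * Vpᵀ := by rw [honeSub, hcomm]
      _ = Δᵀ * W := by
          rw [hW]
          simp only [Matrix.mul_sub, Matrix.mul_assoc]
  have key : D * Vkᵀ * (1 - Z * Zᵀ) = D * Δᵀ * W := by
    rw [Matrix.mul_sub, Matrix.mul_one, Matrix.mul_assoc D Vkᵀ (Z * Zᵀ), hVkZZ,
      ← Matrix.mul_sub, hsub, ← Matrix.mul_assoc]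
  -- ‖B⁻¹‖ ≤ 1
  have hBinvn : ‖B⁻¹‖ ≤ 1 := by
    rw [← specNorm_eq_norm]
    apply norm_le_of_dot _ _ zero_le_one
    intro v
    set u := B⁻¹ *ᵥ v with hu
    have hv : B *ᵥ u = v := by rw [hu, Matrix.mulVec_mulVec, hBB, Matrix.one_mulVec]
    have hBu : B *ᵥ u = u + Δ *ᵥ (Δᵀ *ᵥ u) := by
      rw [hB, Matrix.add_mulVec, Matrix.one_mulVec, ← Matrix.mulVec_mulVec]
    have hq : u ⬝ᵥ (Δ *ᵥ (Δᵀ *ᵥ u)) = (Δᵀ *ᵥ u) ⬝ᵥ (Δᵀ *ᵥ u) := by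
      rw [Matrix.dotProduct_mulVec, ← Matrix.mulVec_transpose]
    have hdot : u ⬝ᵥ (B *ᵥ u) = u ⬝ᵥ u + (Δᵀ *ᵥ u) ⬝ᵥ (Δᵀ *ᵥ u) := by
      rw [hBu, dotProduct_add, hq]
    have hcs := dot_sq_le u (B *ᵥ u)
    have h1 := dot_self_nonneg' u
    have h2 := dot_self_nonneg' (B *ᵥ u)
    have h3 := dot_self_nonneg' (Δᵀ *ᵥ u)
    rw [one_pow, one_mul, ← hv]
    have hU2 : (u ⬝ᵥ u) * (u ⬝ᵥ u) ≤ (u ⬝ᵥ u) * ((B *ᵥ u) ⬝ᵥ (B *ᵥ u)) := by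
      have hle : (u ⬝ᵥ u) ^ 2 ≤ (u ⬝ᵥ (B *ᵥ u)) ^ 2 := by nlinarith
      nlinarith [hcs]
    rcases eq_or_lt_of_le h1 with h | h
    · linarith
    · exact le_of_mul_le_mul_left hU2 h
  -- ‖W‖ ≤ 1
  have hBsym : Bᵀ = B := by
    rw [hB]; simp [Matrix.transpose_add, Matrix.transpose_mul]
  have hWt : Wᵀ = (Vk * Δᵀ - Vp) * B⁻¹ := by
    rw [hW, Matrix.transpose_mul, Matrix.transpose_sub, Matrix.transpose_mul,
      Matrix.transpose_transpose, Matrix.transpose_nonsing_inv, hBsym,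
      Matrix.transpose_transpose]
  have hmid : (Δ * Vkᵀ - Vpᵀ) * (Vk * Δᵀ - Vp) = B := by
    have e1 : Δ * Vkᵀ * (Vk * Δᵀ) = Δ * Δᵀ := by
      rw [← Matrix.mul_assoc, Matrix.mul_assoc Δ Vkᵀ Vk, hVk, Matrix.mul_one]
    have e2 : Δ * Vkᵀ * Vp = 0 := by
      rw [Matrix.mul_assoc, hVkp, Matrix.mul_zero]
    have e3 : Vpᵀ * (Vk * Δᵀ) = 0 := by
      rw [← Matrix.mul_assoc, hVpk, Matrix.zero_mul]
    rw [Matrix.sub_mul, Matrix.mul_sub, Matrix.mul_sub, e1, e2, e3, hVp, hB]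
    abel
  have hWWt : W * Wᵀ = B⁻¹ := by
    rw [hWt, hW, Matrix.mul_assoc, ← Matrix.mul_assoc (Δ * Vkᵀ - Vpᵀ), hmid, hBB,
      Matrix.mul_one]
  have hWn : ‖W‖ ≤ 1 := by
    have hcc := Matrix.l2_opNorm_conjTranspose_mul_self Wᵀ
    have h0 : (Wᵀ)ᴴ = W := by ext i j; simp
    rw [h0, hWWt] at hcc
    have hWtn : ‖Wᵀ‖ = ‖W‖ := by
      rw [← specNorm_eq_norm, ← specNorm_eq_norm, specNorm_transpose]
    rw [hWtn] at hcc
    nlinarith [norm_nonneg W, hBinvn, hcc]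
  have hmain : ‖D * Vkᵀ * (1 - Z * Zᵀ)‖ ≤ ‖D * Δᵀ‖ := by
    rw [key]
    calc ‖D * Δᵀ * W‖ ≤ ‖D * Δᵀ‖ * ‖W‖ := Matrix.l2_opNorm_mul _ _
      _ ≤ ‖D * Δᵀ‖ * 1 := mul_le_mul_of_nonneg_left hWn (norm_nonneg _)
      _ = ‖D * Δᵀ‖ := mul_one _
  have hmain2 : specNorm (D * Vkᵀ * (1 - Z * Zᵀ)) ^ 2 ≤ specNorm (D * Δᵀ) ^ 2 := by
    rw [specNorm_eq_norm, specNorm_eq_norm]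
    exact pow_le_pow_left₀ (norm_nonneg _) hmain 2
  refine ⟨?_, ?_, ?_⟩
  · have hf : 1 ≤ specNorm (Δ * A⁻¹) ^ 2 + 1 := by
      nlinarith [specNorm_nonneg (Δ * A⁻¹)]
    calc specNorm (D * Vkᵀ * (1 - Z * Zᵀ)) ^ 2 ≤ specNorm (D * Δᵀ) ^ 2 := hmain2
      _ ≤ specNorm (D * Δᵀ) ^ 2 * (specNorm (Δ * A⁻¹) ^ 2 + 1) :=
          le_mul_of_one_le_right (sq_nonneg _) hf
  · intro hΔ
    rw [hA, specNorm_mul_inv_eq Δ hΔ]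
  · have hf : 1 ≤ (5 : ℝ) / 4 := by norm_num
    calc specNorm (D * Vkᵀ * (1 - Z * Zᵀ)) ^ 2 ≤ specNorm (D * Δᵀ) ^ 2 := hmain2
      _ ≤ 5 / 4 * specNorm (D * Δᵀ) ^ 2 := by nlinarith [sq_nonneg (specNorm (D * Δᵀ))]
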